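/- arXiv:1811.06026 — 3 statements merged into one kernel-verified Lean document; each statement's English description precedes it below -/
import Mathlib

section
/- In the three-level policy, condition on the intersection W of events W1 (number of pulls of each arm a in each first-level group is within L_fdp·√(T1·log T) of q_a·T1) and W2 (concentration of all consecutive averages in the first-level reward tapes within √(2·log(T)/n) of the mean for windows of length n). Then for every first-level group s and arm a, the empirical mean μ̄_a^{1,s} of the arm-a pulls in group s satisfies |μ̄_a^{1,s} − μ_a| ≤ √(4·log(T)/(q_a·T1)), provided T is larger than some absolute constant. -/
open MeasureTheory ProbabilityTheory

noncomputable section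

namespace IncExp

/-- Number of pulls of arm `a` among the rounds in `S`. -/
def pullCount {Ω : Type} {K : ℕ} (A : ℕ → Ω → Fin K) (S : Finset ℕ) (a : Fin K) (ω : Ω) : ℕ :=
  (S.filter fun s => A s ω = a).card

/-- Empirical mean reward of arm `a` among the rounds in `S`. -/
def empMean {Ω : Type} {K : ℕ} (A : ℕ → Ω → Fin K) (r : ℕ → Ω → ℝ)
    (S : Finset ℕ) (a : Fin K) (ω : Ω) : ℝ :=
  (∑ s ∈ S.filter (fun s => A s ω = a), r s ω) / (pullCount A S a ω : ℝ)

/-- Index of round `t` among the pulls of arm `a` within the rounds `S`: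
the number of pulls of `a` in `S` strictly before round `t`. -/
def idxIn {Ω : Type} {K : ℕ} (A : ℕ → Ω → Fin K) (S : Finset ℕ) (a : Fin K) (ω : Ω) (t : ℕ) : ℕ :=
  pullCount A (S.filter fun s => s < t) a ω

/-- The rounds of `S` carrying the `m`-th (inclusive) through `n`-th (exclusive)
pulls of arm `a` within `S`. -/
def window {Ω : Type} {K : ℕ} (A : ℕ → Ω → Fin K) (S : Finset ℕ) (a : Fin K) (ω : Ω)
    (m n : ℕ) : Finset ℕ :=
  S.filter fun t => A t ω = a ∧ m ≤ idxIn A S a ω t ∧ idxIn A S a ω t < n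

/-- The rounds of `S` carrying the first `n` pulls of arm `a` within `S`. -/
def firstPulls {Ω : Type} {K : ℕ} (A : ℕ → Ω → Fin K) (S : Finset ℕ) (a : Fin K) (ω : Ω)
    (n : ℕ) : Finset ℕ :=
  window A S a ω 0 n

/-- Average reward over a set `W` of rounds. -/
def meanOver {Ω : Type} (r : ℕ → Ω → ℝ) (W : Finset ℕ) (ω : Ω) : ℝ :=
  (∑ t ∈ W, r t ω) / (W.card : ℝ)

/-- An execution of the social-learning bandit process with `K` arms, `T` rounds,
an order-based disclosure policy given by the observation sets `obs`, and agents
responding according to Assumption 1 (with constants `Nest` and `C_est = 1/16`).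
Rewards are Bernoulli, read off an i.i.d. reward tape. -/
structure Execution (Ω : Type) [MeasureSpace Ω] (K T Nest : ℕ) where
  /-- the mean rewards -/
  μ : Fin K → ℝ
  μ_mem : ∀ a, μ a ∈ Set.Icc (1/3 : ℝ) (2/3 : ℝ)
  /-- the subset of past rounds disclosed to agent `t` (fixed in advance) -/
  obs : ℕ → Finset ℕ
  obs_lt : ∀ t, ∀ s ∈ obs t, s < t
  /-- the arm pulled by agent `t` -/
  A : ℕ → Ω → Fin K
  A_meas : ∀ t, Measurable (A t)
  /-- the reward collected at round `t` -/
  r : ℕ → Ω → ℝ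
  /-- the reward tape: cell `(a, j)` is the reward of the `j`-th pull of arm `a` -/
  tape : Fin K → ℕ → Ω → ℝ
  tape_meas : ∀ a j, Measurable (tape a j)
  tape01 : ∀ a j ω, tape a j ω = 0 ∨ tape a j ω = 1
  tape_dist : ∀ a j, volume {ω | tape a j ω = 1} = ENNReal.ofReal (μ a)
  tape_indep : iIndepFun
    (fun p : Fin K × ℕ => fun ω => tape p.1 p.2 ω) volume
  r_eq : ∀ t ω, r t ω = tape (A t ω) (pullCount A (Finset.range t) (A t ω) ω) ω
  /-- the reward estimates formed by agent `t` -/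
  est : ℕ → Fin K → Ω → ℝ
  est_close : ∀ t a ω, Nest ≤ pullCount A (obs t) a ω →
      |est t a ω - empMean A r (obs t) a ω| < (1/16 : ℝ) / Real.sqrt (pullCount A (obs t) a ω)
  est_zero : ∀ t a ω, pullCount A (obs t) a ω = 0 → (1/3 : ℝ) ≤ est t a ω
  /-- each agent pulls an arm maximizing its estimate -/
  A_max : ∀ t ω a, est t a ω ≤ est t (A t ω) ω

/-- Regret of an execution. -/
def regret {Ω : Type} [MeasureSpace Ω] {K T Nest : ℕ} (e : Execution Ω K T Nest) : ℝ :=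
  (T : ℝ) * (⨆ a, e.μ a) - ∑ t ∈ Finset.range T, ∫ ω, e.μ (e.A t ω)

/-- `S` is a full-disclosure path: every agent in `S` observes exactly the full
history of the preceding rounds of `S`. -/
def IsFDPath (obs : ℕ → Finset ℕ) (S : Finset ℕ) : Prop :=
  ∀ t ∈ S, obs t = S.filter fun s => s < t

/-- The `s`-th first-level group of the three-level policy: `T1` full-disclosure
paths of `Lfdp` rounds each. -/
def grp (T1 Lfdp s : ℕ) : Finset ℕ :=
  Finset.Ico (s * T1 * Lfdp) ((s + 1) * T1 * Lfdp)

/-- The three-level policy with parameters `σ, T1, T2, Lfdp`: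
level 1 consists of `σ` groups of `T1` full-disclosure paths of length `Lfdp` each;
level 2 consists of `σ` groups of `T2` agents, each agent of the `s`-th second-level
group observing exactly the history of the `s`-th first-level group;
every agent of level 3 (all remaining rounds) observes exactly the full history of
the first two levels. -/
def ThreeLevel (obs : ℕ → Finset ℕ) (σ T1 T2 Lfdp : ℕ) : Prop :=
  (∀ j < σ * T1, IsFDPath obs (Finset.Ico (j * Lfdp) ((j + 1) * Lfdp))) ∧
  (∀ s < σ, ∀ t ∈ Finset.Ico (σ * T1 * Lfdp + s * T2) (σ * T1 * Lfdp + (s + 1) * T2),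
      obs t = grp T1 Lfdp s) ∧
  (∀ t, σ * T1 * Lfdp + σ * T2 ≤ t → obs t = Finset.range (σ * T1 * Lfdp + σ * T2))

/-- The parameter `σ = 2^10 * log T` of the three-level policy. -/
def sigT (T : ℕ) : ℕ := ⌈(2:ℝ)^(10:ℕ) * Real.log T⌉₊

/-- The parameter `T1 = T^(4/7) * (log T)^(-1/7)` of the three-level policy. -/
def T1of (T : ℕ) : ℕ := ⌈(T : ℝ) ^ ((4:ℝ)/7) * (Real.log T) ^ (-(1:ℝ)/7)⌉₊

/-- The parameter `T2 = T^(6/7) * (log T)^(-5/7)` of the three-level policy. -/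
def T2of (T : ℕ) : ℕ := ⌈(T : ℝ) ^ ((6:ℝ)/7) * (Real.log T) ^ (-(5:ℝ)/7)⌉₊

lemma sum_rank (F : Finset ℕ) (f : ℕ → ℝ) :
    ∑ t ∈ F, f ((F.filter (fun u => u < t)).card) = ∑ j ∈ Finset.range F.card, f j := by
  set φ : ℕ → ℕ := fun t => (F.filter (fun u => u < t)).card with hφ
  have hmono : ∀ t₁ ∈ F, ∀ t₂ ∈ F, t₁ < t₂ → φ t₁ < φ t₂ := by
    intro t₁ h₁ t₂ h₂ hlt
    apply Finset.card_lt_card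
    refine ⟨?_, ?_⟩
    · intro u hu
      simp only [Finset.mem_filter] at hu ⊢
      exact ⟨hu.1, hu.2.trans hlt⟩
    intro hsub
    have := hsub (Finset.mem_filter.2 ⟨h₁, hlt⟩)
    exact absurd (Finset.mem_filter.1 this).2 (lt_irrefl t₁)
  have hinj : Set.InjOn φ F := by
    intro t₁ h₁ t₂ h₂ heq
    rcases lt_trichotomy t₁ t₂ with h | h | h
    · exact absurd heq (hmono t₁ h₁ t₂ h₂ h).ne
    · exact h
    · exact absurd heq.symm (hmono t₂ h₂ t₁ h₁ h).ne
  have hlt : ∀ t ∈ F, φ t < F.card := by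
    intro t ht
    exact Finset.card_lt_card (Finset.filter_ssubset.2 ⟨t, ht, lt_irrefl t⟩)
  have himg : F.image φ = Finset.range F.card := by
    apply Finset.eq_of_subset_of_card_le
    · intro j hj
      obtain ⟨t, ht, rfl⟩ := Finset.mem_image.1 hj
      exact Finset.mem_range.2 (hlt t ht)
    · rw [Finset.card_range, Finset.card_image_of_injOn hinj]
  calc ∑ t ∈ F, f (φ t) = ∑ j ∈ F.image φ, f j :=
        (Finset.sum_image (fun x hx y hy h => hinj hx hy h)).symm
    _ = ∑ j ∈ Finset.range F.card, f j := by rw [himg]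

set_option maxHeartbeats 1600000

/-- in the three-level policy (with the parameters of Theorem 3.3),
write `gtape s a` for the reward tape of arm `a` in first-level group `s`, so that
the `j`-th pull of arm `a` in group `s` receives reward `gtape s a j`.  Fix an
outcome `ω` on which the events `W1` (the number of pulls of each arm `a` in each
first-level group is within `Lfdp·√(T1 log T)` of `q a · T1`) and `W2` (every
window of `n` consecutive cells of each first-level tape has average within
`√(2 log T / n)` of the mean) hold.  Then, provided `T` is larger than some
constant, for every first-level group `s` and arm `a`, the empirical mean
`μ̄_a^{1,s}` of the arm-`a` pulls in group `s` satisfies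
`|μ̄_a^{1,s} - μ a| ≤ √(4 log T / (q a · T1))`. -/
theorem first_level_group_concentration (Nest Lfdp : ℕ) (q : Fin 2 → ℝ)
    (hq0 : ∀ a, 0 < q a) :
    ∃ T0 : ℕ, ∀ T : ℕ, T0 ≤ T →
    ∀ (Ω : Type) [MeasureSpace Ω] [IsProbabilityMeasure (volume : Measure Ω)],
    ∀ e : Execution Ω 2 T Nest,
      ThreeLevel e.obs (sigT T) (T1of T) (T2of T) Lfdp →
      (∀ (a : Fin 2) (j : ℕ), j < sigT T * T1of T →
        ∫ ω, (pullCount e.A (Finset.Ico (j * Lfdp) ((j + 1) * Lfdp)) a ω : ℝ) = q a) →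
    ∀ gtape : ℕ → Fin 2 → ℕ → Ω → ℝ,
      (∀ s < sigT T, ∀ (ω : Ω), ∀ t ∈ grp (T1of T) Lfdp s,
        e.r t ω = gtape s (e.A t ω) (idxIn e.A (grp (T1of T) Lfdp s) (e.A t ω) ω t) ω) →
    ∀ ω : Ω,
      -- event W1 at ω
      (∀ s < sigT T, ∀ a : Fin 2,
        |(pullCount e.A (grp (T1of T) Lfdp s) a ω : ℝ) - q a * T1of T|
          ≤ (Lfdp : ℝ) * Real.sqrt (T1of T * Real.log T)) →
      -- event W2 at ω
      (∀ s < sigT T, ∀ a : Fin 2, ∀ τ1 τ2 : ℕ, τ1 ≤ τ2 → τ2 < T →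
        |(∑ j ∈ Finset.Icc τ1 τ2, gtape s a j ω) / ((τ2 - τ1 + 1 : ℕ) : ℝ) - e.μ a|
          ≤ Real.sqrt (2 * Real.log T / ((τ2 - τ1 + 1 : ℕ) : ℝ))) →
      ∀ s < sigT T, ∀ a : Fin 2,
        |empMean e.A e.r (grp (T1of T) Lfdp s) a ω - e.μ a|
          ≤ Real.sqrt (4 * Real.log T / (q a * T1of T)) := by
  classical
  set qm : ℝ := min (q 0) (q 1) with hqm
  have hqm0 : 0 < qm := lt_min (hq0 0) (hq0 1)
  set C : ℝ := 4 * (Lfdp : ℝ) ^ 2 / qm ^ 2 with hCdef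
  have hC0 : 0 ≤ C := by positivity
  have hrp : ∀ r : ℝ, 0 < r →
      Filter.Tendsto (fun T : ℕ => ((T : ℝ)) ^ r) Filter.atTop Filter.atTop :=
    fun r hr => (tendsto_rpow_atTop hr).comp tendsto_natCast_atTop_atTop
  have h1 : ∀ᶠ T : ℕ in Filter.atTop, (3 : ℕ) ≤ T := Filter.eventually_ge_atTop 3
  have h2 := (hrp ((2 : ℝ)/7) (by norm_num)).eventually_ge_atTop (16 * C)
  have h3 := (hrp ((3 : ℝ)/7) (by norm_num)).eventually_ge_atTop (2 * (Lfdp : ℝ))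
  obtain ⟨T0, hT0⟩ := Filter.eventually_atTop.1 ((h1.and h2).and h3)
  refine ⟨T0, ?_⟩
  intro T hT Ω _ _ e hTL hqint gtape hg ω hW1 hW2 s hs a
  obtain ⟨⟨hT3, h27⟩, h37⟩ := hT0 T hT
  set x : ℝ := (T : ℝ) with hx
  have hx3 : (3 : ℝ) ≤ x := by rw [hx]; exact_mod_cast hT3
  have hx0 : (0 : ℝ) < x := by linarith
  have hx1 : (1 : ℝ) ≤ x := by linarith
  have hlog1 : (1 : ℝ) ≤ Real.log x := by
    rw [Real.le_log_iff_exp_le hx0]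
    exact (Real.exp_one_lt_d9.le.trans (by norm_num)).trans hx3
  have hlog0 : (0 : ℝ) < Real.log x := by linarith
  -- facts about T1
  set t1 : ℕ := T1of T with ht1def
  set y₀ : ℝ := x ^ ((4:ℝ)/7) * (Real.log x) ^ (-(1:ℝ)/7) with hy₀
  have hy₀pos : 0 < y₀ := by
    apply mul_pos (Real.rpow_pos_of_pos hx0 _) (Real.rpow_pos_of_pos hlog0 _)
  have hT1ge : y₀ ≤ (t1 : ℝ) := Nat.le_ceil _
  have hT1pos : (0 : ℝ) < (t1 : ℝ) := lt_of_lt_of_le hy₀pos hT1ge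
  have hx47one : (1 : ℝ) ≤ x ^ ((4:ℝ)/7) := Real.one_le_rpow hx1 (by norm_num)
  have hT1le : (t1 : ℝ) ≤ 2 * x ^ ((4:ℝ)/7) := by
    have h1' : (t1 : ℝ) < y₀ + 1 := Nat.ceil_lt_add_one hy₀pos.le
    have h2' : (Real.log x) ^ (-(1:ℝ)/7) ≤ 1 := by
      apply Real.rpow_le_one_of_one_le_of_nonpos hlog1 (by norm_num)
    have h3' : y₀ ≤ x ^ ((4:ℝ)/7) := by
      calc y₀ ≤ x ^ ((4:ℝ)/7) * 1 := by
            apply mul_le_mul_of_nonneg_left h2' (by positivity)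
        _ = x ^ ((4:ℝ)/7) := mul_one _
    linarith
  -- condition C : t1 * Lfdp ≤ T
  have hx34 : x ^ ((3:ℝ)/7) * x ^ ((4:ℝ)/7) = x := by
    rw [← Real.rpow_add hx0]; norm_num
  have hCnatR : (t1 : ℝ) * (Lfdp : ℝ) ≤ x := by
    calc (t1 : ℝ) * (Lfdp : ℝ) ≤ 2 * x ^ ((4:ℝ)/7) * (Lfdp : ℝ) := by
          apply mul_le_mul_of_nonneg_right hT1le (Nat.cast_nonneg _)
      _ = (2 * (Lfdp : ℝ)) * x ^ ((4:ℝ)/7) := by ring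
      _ ≤ x ^ ((3:ℝ)/7) * x ^ ((4:ℝ)/7) := by
          apply mul_le_mul_of_nonneg_right h37 (by positivity)
      _ = x := hx34
  have hCnat : t1 * Lfdp ≤ T := by rw [hx] at hCnatR; exact_mod_cast hCnatR
  -- condition B : the W1 slack is at most (qm * t1) / 2
  have hClog : C * Real.log x ≤ (t1 : ℝ) := by
    have hlog17 : (0 : ℝ) < (Real.log x) ^ ((1:ℝ)/7) := Real.rpow_pos_of_pos hlog0 _
    have hkey : C * Real.log x * (Real.log x) ^ ((1:ℝ)/7) ≤ x ^ ((4:ℝ)/7) := by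
      have e1 : Real.log x * (Real.log x) ^ ((1:ℝ)/7) = (Real.log x) ^ ((8:ℝ)/7) := by
        nth_rewrite 1 [← Real.rpow_one (Real.log x)]
        rw [← Real.rpow_add hlog0]; norm_num
      have e2 : (Real.log x) ^ ((8:ℝ)/7) ≤ 16 * x ^ ((2:ℝ)/7) := by
        have hl4 : Real.log x ≤ 4 * x ^ ((1:ℝ)/4) := by
          have := Real.log_le_rpow_div hx0.le (show (0:ℝ) < 1/4 by norm_num)
          calc Real.log x ≤ x ^ ((1:ℝ)/4) / (1/4) := by simpa using this
            _ = 4 * x ^ ((1:ℝ)/4) := by ring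
        calc (Real.log x) ^ ((8:ℝ)/7) ≤ (4 * x ^ ((1:ℝ)/4)) ^ ((8:ℝ)/7) :=
              Real.rpow_le_rpow hlog0.le hl4 (by norm_num)
          _ = (4:ℝ) ^ ((8:ℝ)/7) * (x ^ ((1:ℝ)/4)) ^ ((8:ℝ)/7) := by
              rw [Real.mul_rpow (by norm_num) (by positivity)]
          _ = (4:ℝ) ^ ((8:ℝ)/7) * x ^ ((2:ℝ)/7) := by
              rw [← Real.rpow_mul hx0.le]; norm_num
          _ ≤ 16 * x ^ ((2:ℝ)/7) := by
              apply mul_le_mul_of_nonneg_right ?_ (by positivity)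
              calc (4:ℝ) ^ ((8:ℝ)/7) ≤ (4:ℝ) ^ ((2:ℝ)) :=
                    Real.rpow_le_rpow_of_exponent_le (by norm_num) (by norm_num)
                _ = 16 := by
                    rw [show ((2:ℝ)) = ((2:ℕ) : ℝ) by norm_num, Real.rpow_natCast]
                    norm_num
      have e3 : C * ((16:ℝ) * x ^ ((2:ℝ)/7)) ≤ x ^ ((4:ℝ)/7) := by
        have : (16 * C) * x ^ ((2:ℝ)/7) ≤ x ^ ((2:ℝ)/7) * x ^ ((2:ℝ)/7) := by
          apply mul_le_mul_of_nonneg_right h27 (by positivity)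
        have e4 : x ^ ((2:ℝ)/7) * x ^ ((2:ℝ)/7) = x ^ ((4:ℝ)/7) := by
          rw [← Real.rpow_add hx0]; norm_num
        nlinarith [Real.rpow_pos_of_pos hx0 ((2:ℝ)/7)]
      calc C * Real.log x * (Real.log x) ^ ((1:ℝ)/7) = C * (Real.log x) ^ ((8:ℝ)/7) := by
            rw [mul_assoc, e1]
        _ ≤ C * (16 * x ^ ((2:ℝ)/7)) := by
            apply mul_le_mul_of_nonneg_left e2 hC0
        _ ≤ x ^ ((4:ℝ)/7) := e3
    have : C * Real.log x ≤ y₀ := by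
      rw [hy₀, show (-(1:ℝ)/7) = -((1:ℝ)/7) by norm_num, Real.rpow_neg hlog0.le,
        ← div_eq_mul_inv, le_div_iff₀ hlog17]
      exact hkey
    linarith
  have hB : (Lfdp : ℝ) * Real.sqrt ((t1 : ℝ) * Real.log x) ≤ qm * (t1 : ℝ) / 2 := by
    rcases Nat.eq_zero_or_pos Lfdp with hL0 | hLpos
    · rw [hL0]; simp; positivity
    · have hL : (0 : ℝ) < (Lfdp : ℝ) := by exact_mod_cast hLpos
      have hs1 : (t1 : ℝ) * Real.log x ≤ (qm * (t1 : ℝ) / (2 * Lfdp)) ^ 2 := by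
        have h1' : Real.log x ≤ (t1 : ℝ) / C := by
          rw [le_div_iff₀ (by positivity)]
          linarith [hClog]
        have hCpos : (0 : ℝ) < C := by positivity
        have : (t1 : ℝ) * Real.log x ≤ (t1 : ℝ) * ((t1 : ℝ) / C) := by
          apply mul_le_mul_of_nonneg_left h1' hT1pos.le
        calc (t1 : ℝ) * Real.log x ≤ (t1 : ℝ) * ((t1 : ℝ) / C) := this
          _ = (qm * (t1 : ℝ) / (2 * Lfdp)) ^ 2 := by
              rw [hCdef]; field_simp; ring
      have hs2 : Real.sqrt ((t1 : ℝ) * Real.log x) ≤ qm * (t1 : ℝ) / (2 * Lfdp) := by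
        calc Real.sqrt ((t1 : ℝ) * Real.log x)
            ≤ Real.sqrt ((qm * (t1 : ℝ) / (2 * Lfdp)) ^ 2) := Real.sqrt_le_sqrt hs1
          _ = qm * (t1 : ℝ) / (2 * Lfdp) := Real.sqrt_sq (by positivity)
      calc (Lfdp : ℝ) * Real.sqrt ((t1 : ℝ) * Real.log x)
          ≤ (Lfdp : ℝ) * (qm * (t1 : ℝ) / (2 * Lfdp)) := by
            apply mul_le_mul_of_nonneg_left hs2 hL.le
        _ = qm * (t1 : ℝ) / 2 := by field_simp
  -- the pull count in the group
  set G : Finset ℕ := grp t1 Lfdp s with hGdef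
  set F : Finset ℕ := G.filter (fun t => e.A t ω = a) with hFdef
  set N : ℕ := pullCount e.A G a ω with hNdef
  have hNF : N = F.card := rfl
  have hqa : qm ≤ q a := by
    fin_cases a
    · exact min_le_left _ _
    · exact min_le_right _ _
  have hW1a := hW1 s hs a
  have hNlow : q a * (t1 : ℝ) / 2 ≤ (N : ℝ) := by
    have habs := abs_le.1 hW1a
    have h1' : (Lfdp : ℝ) * Real.sqrt ((t1 : ℝ) * Real.log x) ≤ q a * (t1 : ℝ) / 2 := by
      calc (Lfdp : ℝ) * Real.sqrt ((t1 : ℝ) * Real.log x) ≤ qm * (t1 : ℝ) / 2 := hB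
        _ ≤ q a * (t1 : ℝ) / 2 := by nlinarith [hT1pos]
    have := habs.1
    simp only [hNdef] at this ⊢
    linarith
  have hNpos : (0 : ℝ) < (N : ℝ) := by nlinarith [hq0 a, hT1pos]
  have hN1 : 1 ≤ N := by exact_mod_cast Nat.one_le_iff_ne_zero.2 (by
    intro h; rw [h] at hNpos; simp at hNpos)
  have hNcard : N ≤ t1 * Lfdp := by
    have h1' : F.card ≤ G.card := Finset.card_filter_le _ _
    have h2' : G.card = t1 * Lfdp := by
      rw [hGdef]
      unfold grp
      rw [Nat.card_Ico]
      have : (s + 1) * t1 * Lfdp = s * t1 * Lfdp + t1 * Lfdp := by ring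
      rw [this, Nat.add_sub_cancel_left]
    rw [hNF]; omega
  have hNT : N - 1 < T := by omega
  -- the empirical mean is the tape average over the first N cells
  have hsum : ∑ t ∈ F, e.r t ω = ∑ j ∈ Finset.range N, gtape s a j ω := by
    have hterm : ∀ t ∈ F, e.r t ω = gtape s a ((F.filter (fun u => u < t)).card) ω := by
      intro t ht
      obtain ⟨htG, hta⟩ := Finset.mem_filter.1 ht
      rw [hg s hs ω t htG, hta]
      congr 1
      show pullCount e.A (G.filter fun u => u < t) a ω = _
      unfold pullCount
      rw [hFdef, Finset.filter_comm]
    calc ∑ t ∈ F, e.r t ω = ∑ t ∈ F, gtape s a ((F.filter (fun u => u < t)).card) ω :=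
          Finset.sum_congr rfl hterm
      _ = ∑ j ∈ Finset.range F.card, gtape s a j ω := sum_rank F (fun j => gtape s a j ω)
      _ = ∑ j ∈ Finset.range N, gtape s a j ω := by rw [hNF]
  have hIcc : Finset.Icc 0 (N - 1) = Finset.range N := by
    rw [Finset.range_eq_Ico, ← Finset.Ico_add_one_right_eq_Icc]
    congr 1
    omega
  have hcount : (N - 1 - 0 + 1 : ℕ) = N := by omega
  have hW2app := hW2 s hs a 0 (N - 1) (Nat.zero_le _) hNT
  rw [hcount, hIcc] at hW2app
  have hemp : empMean e.A e.r G a ω = (∑ j ∈ Finset.range N, gtape s a j ω) / (N : ℝ) := by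
    unfold empMean
    rw [← hNdef, ← hFdef, hsum]
  calc |empMean e.A e.r G a ω - e.μ a|
      ≤ Real.sqrt (2 * Real.log x / (N : ℝ)) := by rw [hemp]; exact hW2app
    _ ≤ Real.sqrt (4 * Real.log x / (q a * (t1 : ℝ))) := by
        apply Real.sqrt_le_sqrt
        rw [div_le_div_iff₀ hNpos (mul_pos (hq0 a) hT1pos)]
        nlinarith [hNlow, hlog0]


end IncExp
end
end

section
/- In the three-level policy, condition on the intersection W of the events W1 (concentration of per-group pull counts), W2 (concentration of tape averages), and W3 (anti-concentration: for each arm a there is a group s_a whose first q_a·T1 tape cells for arm a average at least μ_a + 1/√(q_a·T1) while the first q_{3−a}·T1 tape cells for arm 3−a average at most μ_{3−a} − 1/√(q_{3−a}·T1)). Then for each arm a ∈ {1,2} there exists a first-level group s_a such that the empirical means of the pulls in group s_a satisfy μ̄_a^{1,s_a} > μ_a + 1/(4·√(q_a·T1)) and μ̄_{3−a}^{1,s_a} < μ_{3−a} − 1/(4·√(q_{3−a}·T1)), provided T is larger than some absolute constant. -/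
open MeasureTheory ProbabilityTheory

noncomputable section

namespace IncExp

set_option maxHeartbeats 1000000

lemma idx_card {Ω : Type} {K : ℕ} (A : ℕ → Ω → Fin K) (S : Finset ℕ) (a : Fin K) (ω : Ω) (t : ℕ) :
    idxIn A S a ω t = ((S.filter fun s => A s ω = a).filter fun s => s < t).card := by
  unfold idxIn pullCount
  congr 1
  ext x
  simp only [Finset.mem_filter]
  tauto

lemma sum_pulls_eq {Ω : Type} {K : ℕ} (A : ℕ → Ω → Fin K) (S : Finset ℕ) (a : Fin K)
    (ω : Ω) (g : ℕ → ℝ) :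
    ∑ t ∈ S.filter (fun t => A t ω = a), g (idxIn A S a ω t)
      = ∑ j ∈ Finset.range (pullCount A S a ω), g j := by
  classical
  set F := S.filter (fun t => A t ω = a) with hF
  have hidx : ∀ t, idxIn A S a ω t = (F.filter fun s => s < t).card := fun t => idx_card A S a ω t
  have hmono : ∀ t1 ∈ F, ∀ t2 ∈ F, t1 < t2 →
      (F.filter fun s => s < t1).card < (F.filter fun s => s < t2).card := by
    intro t1 h1 t2 h2 hlt
    apply Finset.card_lt_card
    have hsub : (F.filter fun s => s < t1) ⊆ (F.filter fun s => s < t2) := by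
      intro x hx
      simp only [Finset.mem_filter] at hx ⊢
      exact ⟨hx.1, hx.2.trans hlt⟩
    rw [Finset.ssubset_iff_of_subset hsub]
    exact ⟨t1, by simp [h1, hlt], by simp⟩
  have hinj : ∀ t1 ∈ F, ∀ t2 ∈ F, idxIn A S a ω t1 = idxIn A S a ω t2 → t1 = t2 := by
    intro t1 h1 t2 h2 heq
    rw [hidx, hidx] at heq
    rcases lt_trichotomy t1 t2 with h | h | h
    · exact absurd heq (Nat.ne_of_lt (hmono t1 h1 t2 h2 h))
    · exact h
    · exact absurd heq.symm (Nat.ne_of_lt (hmono t2 h2 t1 h1 h))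
  have hbound : ∀ t ∈ F, (F.filter fun s => s < t).card < F.card := by
    intro t ht
    apply Finset.card_lt_card
    rw [Finset.ssubset_iff_of_subset (Finset.filter_subset _ _)]
    exact ⟨t, ht, by simp⟩
  have himg : F.image (fun t => idxIn A S a ω t) = Finset.range F.card := by
    apply Finset.eq_of_subset_of_card_le
    · intro j hj
      obtain ⟨t, ht, rfl⟩ := Finset.mem_image.mp hj
      rw [Finset.mem_range, hidx]
      exact hbound t ht
    · rw [Finset.card_range, Finset.card_image_of_injOn fun t1 h1 t2 h2 h =>
        hinj t1 (Finset.mem_coe.mp h1) t2 (Finset.mem_coe.mp h2) h]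
  have hpc : pullCount A S a ω = F.card := rfl
  rw [hpc, ← himg, Finset.sum_image hinj]

lemma window_transfer_le (g : ℕ → ℝ) (μ Lg B : ℝ) (Tn : ℕ)
    (hL : 0 ≤ Lg) (hB : 0 ≤ B)
    (hW : ∀ τ1 τ2 : ℕ, τ1 ≤ τ2 → τ2 < Tn →
      |(∑ j ∈ Finset.Icc τ1 τ2, g j) / ((τ2 - τ1 + 1 : ℕ) : ℝ) - μ|
        ≤ Real.sqrt (2 * Lg / ((τ2 - τ1 + 1 : ℕ) : ℝ)))
    (M N : ℕ) (hMN : M ≤ N) (hNT : N < Tn) (hlen : (N : ℝ) - M ≤ B) :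
    |(∑ j ∈ Finset.range N, g j) - (∑ j ∈ Finset.range M, g j) - ((N : ℝ) - M) * μ|
      ≤ Real.sqrt (2 * Lg * B) := by
  rcases eq_or_lt_of_le hMN with rfl | hlt
  · simp [Real.sqrt_nonneg]
  · have hN1 : 1 ≤ N := Nat.one_le_of_lt hlt
    have hIco : ∑ j ∈ Finset.Ico M N, g j
        = (∑ j ∈ Finset.range N, g j) - ∑ j ∈ Finset.range M, g j :=
      Finset.sum_Ico_eq_sub _ hMN
    have hIcc : Finset.Icc M (N - 1) = Finset.Ico M N := by
      rw [← Finset.Ico_add_one_right_eq_Icc]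
      congr 1
      omega
    have hτ : M ≤ N - 1 := by omega
    have hτT : N - 1 < Tn := lt_of_le_of_lt (Nat.sub_le N 1) hNT
    have hcard : (N - 1 - M + 1 : ℕ) = N - M := by omega
    have hw := hW M (N - 1) hτ hτT
    rw [hIcc, hIco, hcard] at hw
    set n : ℝ := (N : ℝ) - M with hn
    have hcast : ((N - M : ℕ) : ℝ) = n := by
      rw [hn, Nat.cast_sub hMN]
    rw [hcast] at hw
    have hnpos : 0 < n := by
      rw [hn]
      have : (M:ℝ) < N := by exact_mod_cast hlt
      linarith
    set W : ℝ := (∑ j ∈ Finset.range N, g j) - ∑ j ∈ Finset.range M, g j with hW'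
    have h1 : |W - n * μ| = |W / n - μ| * n := by
      have he : W - n * μ = (W / n - μ) * n := by field_simp
      rw [he, abs_mul, abs_of_pos hnpos]
    have h2 : Real.sqrt (2 * Lg / n) * n = Real.sqrt (2 * Lg * n) := by
      rw [show 2 * Lg * n = 2 * Lg / n * n ^ 2 by field_simp,
        Real.sqrt_mul (by positivity), Real.sqrt_sq hnpos.le]
    calc |W - n * μ| = |W / n - μ| * n := h1
      _ ≤ Real.sqrt (2 * Lg / n) * n := mul_le_mul_of_nonneg_right hw hnpos.le
      _ = Real.sqrt (2 * Lg * n) := h2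
      _ ≤ Real.sqrt (2 * Lg * B) := by
          apply Real.sqrt_le_sqrt
          exact mul_le_mul_of_nonneg_left hlen (by positivity)

lemma window_transfer (g : ℕ → ℝ) (μ Lg B : ℝ) (Tn : ℕ)
    (hL : 0 ≤ Lg) (hB : 0 ≤ B)
    (hW : ∀ τ1 τ2 : ℕ, τ1 ≤ τ2 → τ2 < Tn →
      |(∑ j ∈ Finset.Icc τ1 τ2, g j) / ((τ2 - τ1 + 1 : ℕ) : ℝ) - μ|
        ≤ Real.sqrt (2 * Lg / ((τ2 - τ1 + 1 : ℕ) : ℝ)))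
    (M N : ℕ) (hNT : N < Tn) (hMT : M < Tn) (hlen : |(N : ℝ) - M| ≤ B) :
    |(∑ j ∈ Finset.range N, g j) - (∑ j ∈ Finset.range M, g j) - ((N : ℝ) - M) * μ|
      ≤ Real.sqrt (2 * Lg * B) := by
  rcases le_total M N with h | h
  · exact window_transfer_le g μ Lg B Tn hL hB hW M N h hNT
      (le_trans (le_abs_self _) hlen)
  · have hres := window_transfer_le g μ Lg B Tn hL hB hW N M h hMT
      (by rw [abs_sub_comm] at hlen; exact le_trans (le_abs_self _) hlen)
    rw [show (∑ j ∈ Finset.range N, g j) - (∑ j ∈ Finset.range M, g j) - ((N:ℝ) - M) * μ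
      = -((∑ j ∈ Finset.range M, g j) - (∑ j ∈ Finset.range N, g j) - ((M:ℝ) - N) * μ) by ring,
      abs_neg]
    exact hres

/-- The set of quantitative conditions on `T` needed for the lucky-group argument. -/
def Conds (Lfdp T : ℕ) (c : ℝ) : Prop :=
  1 ≤ Real.log T ∧ 16 ≤ c * T1of T ∧
  2 * Lfdp * Real.sqrt (T1of T * Real.log T) ≤ c * T1of T ∧
  128 * (Lfdp * Real.sqrt (T1of T * Real.log T) + 1) * Real.log T ≤ c * T1of T ∧
  c * T1of T + Lfdp * Real.sqrt (T1of T * Real.log T) < T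

lemma evt (Lfdp : ℕ) (c : ℝ) (hc : 0 < c) : ∀ᶠ T : ℕ in Filter.atTop, Conds Lfdp T c := by
  have hρpos : 0 < c / (130 * ((Lfdp:ℝ) + 1)) := by positivity
  set ρ : ℝ := c / (130 * ((Lfdp:ℝ) + 1)) with hρ
  have h37 : Filter.Tendsto (fun T : ℕ => ((T:ℝ)) ^ ((3:ℝ)/7)) Filter.atTop Filter.atTop :=
    (tendsto_rpow_atTop (by norm_num)).comp tendsto_natCast_atTop_atTop
  have h314 : Filter.Tendsto (fun T : ℕ => ((T:ℝ)) ^ ((3:ℝ)/14)) Filter.atTop Filter.atTop :=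
    (tendsto_rpow_atTop (by norm_num)).comp tendsto_natCast_atTop_atTop
  have hlog : Filter.Tendsto
      (fun T : ℕ => (Real.log T) ^ ((2:ℕ):ℝ) / ((T:ℝ)) ^ ((3:ℝ)/14)) Filter.atTop (nhds 0) :=
    ((isLittleO_log_rpow_rpow_atTop ((2:ℕ):ℝ)
      (by norm_num : (0:ℝ) < 3/14)).tendsto_div_nhds_zero).comp tendsto_natCast_atTop_atTop
  filter_upwards [Filter.eventually_ge_atTop 3,
    h37.eventually_ge_atTop (16 / c + 1),
    h314.eventually_ge_atTop (2 * c + 2 * Lfdp + 1),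
    hlog.eventually (gt_mem_nhds hρpos)] with T h3 hbig hM hρT
  set t : ℝ := (T : ℝ) with htdef
  have ht3 : (3:ℝ) ≤ t := by rw [htdef]; exact_mod_cast h3
  have ht0 : (0:ℝ) < t := by linarith
  have ht1 : (1:ℝ) ≤ t := by linarith
  set L : ℝ := Real.log t with hLdef
  have hL1 : 1 ≤ L := by
    rw [hLdef, Real.le_log_iff_exp_le ht0]
    calc Real.exp 1 ≤ 2.7182818286 := Real.exp_one_lt_d9.le
      _ ≤ t := by linarith
  have hL0 : 0 < L := by linarith
  have hLt : L ≤ t := (Real.log_le_sub_one_of_pos ht0).trans (by linarith)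
  set T1 : ℝ := (T1of T : ℝ) with hT1def
  have hT1low : t ^ ((3:ℝ)/7) ≤ T1 := by
    have step1 : t ^ (-(1:ℝ)/7) ≤ L ^ (-(1:ℝ)/7) :=
      Real.rpow_le_rpow_of_nonpos hL0 hLt (by norm_num)
    have step2 : t ^ ((3:ℝ)/7) = t ^ ((4:ℝ)/7) * t ^ (-(1:ℝ)/7) := by
      rw [← Real.rpow_add ht0]; norm_num
    calc t ^ ((3:ℝ)/7) = t ^ ((4:ℝ)/7) * t ^ (-(1:ℝ)/7) := step2
      _ ≤ t ^ ((4:ℝ)/7) * L ^ (-(1:ℝ)/7) :=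
          mul_le_mul_of_nonneg_left step1 (Real.rpow_nonneg ht0.le _)
      _ ≤ T1 := Nat.le_ceil _
  have h47pos : (0:ℝ) < t ^ ((4:ℝ)/7) := Real.rpow_pos_of_pos ht0 _
  have hT1up : T1 ≤ t ^ ((4:ℝ)/7) + 1 := by
    have h1 : L ^ (-(1:ℝ)/7) ≤ 1 :=
      Real.rpow_le_one_of_one_le_of_nonpos hL1 (by norm_num)
    have h2 : t ^ ((4:ℝ)/7) * L ^ (-(1:ℝ)/7) ≤ t ^ ((4:ℝ)/7) := by
      nlinarith [Real.rpow_nonneg hL0.le (-(1:ℝ)/7)]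
    have h3' := Nat.ceil_lt_add_one (by positivity : (0:ℝ) ≤ t ^ ((4:ℝ)/7) * L ^ (-(1:ℝ)/7))
    have h4 : T1 < t ^ ((4:ℝ)/7) * L ^ (-(1:ℝ)/7) + 1 := h3'
    linarith
  have hT1pos : 0 < T1 := lt_of_lt_of_le (Real.rpow_pos_of_pos ht0 _) hT1low
  have hsT1 : t ^ ((3:ℝ)/14) ≤ Real.sqrt T1 := by
    have h1 : Real.sqrt (t ^ ((3:ℝ)/7)) = t ^ ((3:ℝ)/14) := by
      rw [Real.sqrt_eq_rpow, ← Real.rpow_mul ht0.le]; norm_num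
    rw [← h1]; exact Real.sqrt_le_sqrt hT1low
  have h314ge1 : (1:ℝ) ≤ t ^ ((3:ℝ)/14) := Real.one_le_rpow ht1 (by norm_num)
  have hs1 : (1:ℝ) ≤ Real.sqrt T1 := le_trans h314ge1 hsT1
  have hsT1pos : 0 < Real.sqrt T1 := by linarith
  have hss : Real.sqrt T1 * Real.sqrt T1 = T1 := Real.mul_self_sqrt hT1pos.le
  have hL2 : L ^ 2 ≤ ρ * Real.sqrt T1 := by
    have h1 : L ^ ((2:ℕ):ℝ) / t ^ ((3:ℝ)/14) < ρ := hρT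
    rw [Real.rpow_natCast] at h1
    have hp : (0:ℝ) < t ^ ((3:ℝ)/14) := Real.rpow_pos_of_pos ht0 _
    have h2 : L ^ 2 < ρ * t ^ ((3:ℝ)/14) := by
      have hm := mul_lt_mul_of_pos_right h1 hp
      rw [div_mul_cancel₀] at hm
      · linarith
      · exact hp.ne'
    have h3' := mul_le_mul_of_nonneg_left hsT1 hρpos.le
    linarith
  have hkey : 130 * ((Lfdp:ℝ) + 1) * (L ^ 2 * Real.sqrt T1) ≤ c * T1 := by
    have h1 : L ^ 2 * Real.sqrt T1 ≤ ρ * T1 := by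
      have hm := mul_le_mul_of_nonneg_right hL2 hsT1pos.le
      calc L ^ 2 * Real.sqrt T1 ≤ ρ * Real.sqrt T1 * Real.sqrt T1 := hm
        _ = ρ * T1 := by rw [mul_assoc, hss]
    have h2 : 130 * ((Lfdp:ℝ) + 1) * (ρ * T1) = c * T1 := by
      rw [hρ]; field_simp
    have h3' := mul_le_mul_of_nonneg_left h1 (by positivity : (0:ℝ) ≤ 130 * ((Lfdp:ℝ) + 1))
    linarith
  have hsqrtTL : Real.sqrt (T1 * L) = Real.sqrt T1 * Real.sqrt L := Real.sqrt_mul hT1pos.le _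
  have hsLge1 : (1:ℝ) ≤ Real.sqrt L := (Real.le_sqrt' one_pos).mpr (by nlinarith)
  have hsL : Real.sqrt L ≤ L := by
    calc Real.sqrt L ≤ Real.sqrt (L ^ 2) := Real.sqrt_le_sqrt (by nlinarith)
      _ = L := Real.sqrt_sq hL0.le
  have hLfnn : (0:ℝ) ≤ (Lfdp:ℝ) := Nat.cast_nonneg _
  have hboundTL : Real.sqrt (T1 * L) ≤ Real.sqrt T1 * L ^ 2 := by
    rw [hsqrtTL]
    have h1 : Real.sqrt L ≤ L ^ 2 := by nlinarith
    exact mul_le_mul_of_nonneg_left h1 hsT1pos.le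
  refine ⟨hL1, ?_, ?_, ?_, ?_⟩
  · have h1 : 16 / c + 1 ≤ T1 := le_trans hbig hT1low
    have h2 : 16 / c ≤ T1 := by linarith
    calc (16:ℝ) = c * (16 / c) := by field_simp
      _ ≤ c * T1 := mul_le_mul_of_nonneg_left h2 hc.le
  · have h1 : 2 * (Lfdp:ℝ) * Real.sqrt (T1 * L) ≤ 2 * Lfdp * (Real.sqrt T1 * L ^ 2) :=
      mul_le_mul_of_nonneg_left hboundTL (by positivity)
    have h2 : (0:ℝ) ≤ L ^ 2 * Real.sqrt T1 := by positivity
    nlinarith [hkey]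
  · have hge1 : (1:ℝ) ≤ Real.sqrt T1 * Real.sqrt L := by nlinarith
    have step1 : (Lfdp:ℝ) * Real.sqrt (T1 * L) + 1 ≤ ((Lfdp:ℝ) + 1) * (Real.sqrt T1 * Real.sqrt L) := by
      rw [hsqrtTL]
      have h1 : (Lfdp:ℝ) * (Real.sqrt T1 * Real.sqrt L) + 1 ≤
          (Lfdp:ℝ) * (Real.sqrt T1 * Real.sqrt L) + Real.sqrt T1 * Real.sqrt L := by linarith
      linarith [h1]
    have step2 : 128 * ((Lfdp:ℝ) * Real.sqrt (T1 * L) + 1) * L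
        ≤ 128 * (((Lfdp:ℝ) + 1) * (Real.sqrt T1 * Real.sqrt L)) * L := by
      have hm := mul_le_mul_of_nonneg_right step1 hL0.le
      linarith
    have step3 : 128 * (((Lfdp:ℝ) + 1) * (Real.sqrt T1 * Real.sqrt L)) * L
        ≤ 128 * (((Lfdp:ℝ) + 1) * (Real.sqrt T1 * (L * L))) := by
      have h1 : Real.sqrt L * L ≤ L * L := mul_le_mul_of_nonneg_right hsL hL0.le
      have h2 := mul_le_mul_of_nonneg_left h1
        (by positivity : (0:ℝ) ≤ 128 * (((Lfdp:ℝ) + 1) * Real.sqrt T1))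
      nlinarith [h2]
    have step4 : 128 * (((Lfdp:ℝ) + 1) * (Real.sqrt T1 * (L * L)))
        ≤ 130 * ((Lfdp:ℝ) + 1) * (L ^ 2 * Real.sqrt T1) := by nlinarith [hsT1pos.le, sq_nonneg L]
    linarith [hkey]
  · have h47ge1 : (1:ℝ) ≤ t ^ ((4:ℝ)/7) := Real.one_le_rpow ht1 (by norm_num)
    have hT1up2 : T1 ≤ 2 * t ^ ((4:ℝ)/7) := by linarith
    have h1114 : t ^ ((4:ℝ)/7) * t = t ^ ((11:ℝ)/7) := by
      rw [show ((11:ℝ)/7) = (4:ℝ)/7 + 1 by norm_num, Real.rpow_add ht0, Real.rpow_one]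
    have hTL : T1 * L ≤ 2 * t ^ ((11:ℝ)/7) := by
      calc T1 * L ≤ (2 * t ^ ((4:ℝ)/7)) * t :=
            mul_le_mul hT1up2 hLt hL0.le (by positivity)
        _ = 2 * t ^ ((11:ℝ)/7) := by rw [mul_assoc, h1114]
    have hsqrt1114 : Real.sqrt (t ^ ((11:ℝ)/7)) = t ^ ((11:ℝ)/14) := by
      rw [Real.sqrt_eq_rpow, ← Real.rpow_mul ht0.le]; norm_num
    have h1114pos : (0:ℝ) < t ^ ((11:ℝ)/14) := Real.rpow_pos_of_pos ht0 _
    have hsqrtTL2 : Real.sqrt (T1 * L) ≤ 2 * t ^ ((11:ℝ)/14) := by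
      calc Real.sqrt (T1 * L) ≤ Real.sqrt (2 * t ^ ((11:ℝ)/7)) := Real.sqrt_le_sqrt hTL
        _ = Real.sqrt 2 * t ^ ((11:ℝ)/14) := by rw [Real.sqrt_mul (by norm_num), hsqrt1114]
        _ ≤ 2 * t ^ ((11:ℝ)/14) := by
            have h2 : Real.sqrt 2 ≤ 2 := by
              have ha : Real.sqrt 2 ≤ Real.sqrt 4 := Real.sqrt_le_sqrt (by norm_num)
              have hb : Real.sqrt 4 = 2 := by
                rw [show (4:ℝ) = 2 ^ 2 by norm_num, Real.sqrt_sq (by norm_num : (0:ℝ) ≤ 2)]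
              linarith
            exact mul_le_mul_of_nonneg_right h2 h1114pos.le
    have hexp : t ^ ((4:ℝ)/7) ≤ t ^ ((11:ℝ)/14) :=
      Real.rpow_le_rpow_of_exponent_le ht1 (by norm_num)
    have hfin : (2 * c + 2 * (Lfdp:ℝ) + 1) * t ^ ((11:ℝ)/14) ≤ t := by
      have he : t ^ ((3:ℝ)/14) * t ^ ((11:ℝ)/14) = t := by
        rw [← Real.rpow_add ht0]; norm_num
      calc (2 * c + 2 * (Lfdp:ℝ) + 1) * t ^ ((11:ℝ)/14)
          ≤ t ^ ((3:ℝ)/14) * t ^ ((11:ℝ)/14) := mul_le_mul_of_nonneg_right hM h1114pos.le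
        _ = t := he
    have hA : c * T1 ≤ 2 * c * t ^ ((11:ℝ)/14) := by
      have h1 := mul_le_mul_of_nonneg_left hT1up2 hc.le
      have h2 := mul_le_mul_of_nonneg_left hexp (by positivity : (0:ℝ) ≤ 2 * c)
      linarith
    have hB : (Lfdp:ℝ) * Real.sqrt (T1 * L) ≤ 2 * (Lfdp:ℝ) * t ^ ((11:ℝ)/14) := by
      have h1 := mul_le_mul_of_nonneg_left hsqrtTL2 hLfnn
      linarith
    nlinarith [h1114pos]

lemma core (Lfdp T : ℕ) (c μv : ℝ) (hC : Conds Lfdp T c)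
    (g : ℕ → ℝ) (N : ℕ)
    (hN : |(N:ℝ) - c * T1of T| ≤ Lfdp * Real.sqrt (T1of T * Real.log T))
    (hW : ∀ τ1 τ2 : ℕ, τ1 ≤ τ2 → τ2 < T →
      |(∑ j ∈ Finset.Icc τ1 τ2, g j) / ((τ2 - τ1 + 1 : ℕ) : ℝ) - μv|
        ≤ Real.sqrt (2 * Real.log T / ((τ2 - τ1 + 1 : ℕ) : ℝ))) :
    0 < N ∧ 1 ≤ ⌊c * ((T1of T : ℕ) : ℝ)⌋₊ ∧
    |(∑ j ∈ Finset.range N, g j) - (∑ j ∈ Finset.range ⌊c * ((T1of T : ℕ) : ℝ)⌋₊, g j)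
        - ((N:ℝ) - ⌊c * ((T1of T : ℕ) : ℝ)⌋₊) * μv|
      ≤ Real.sqrt (2 * Real.log T * (Lfdp * Real.sqrt (T1of T * Real.log T) + 1)) ∧
    (N:ℝ)/4 * (1 / Real.sqrt (c * T1of T)) +
      Real.sqrt (2 * Real.log T * (Lfdp * Real.sqrt (T1of T * Real.log T) + 1))
      < (⌊c * ((T1of T : ℕ) : ℝ)⌋₊ : ℝ) * (1 / Real.sqrt (c * T1of T)) := by
  obtain ⟨hL1, h16, hb, hcc, hE1⟩ := hC
  set L : ℝ := Real.log T with hLdef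
  set δ : ℝ := Lfdp * Real.sqrt (T1of T * L) with hδdef
  set u : ℝ := c * (T1of T : ℝ) with hudef
  have hδ0 : 0 ≤ δ := by positivity
  have hL0 : 0 < L := by linarith
  have habsN := abs_le.mp hN
  have hNlow : u - δ ≤ (N:ℝ) := by linarith [habsN.1]
  have hNup : (N:ℝ) ≤ u + δ := by linarith [habsN.2]
  have hNpos : 0 < N := by
    have h : (0:ℝ) < (N:ℝ) := by linarith
    exact_mod_cast h
  set M : ℕ := ⌊u⌋₊ with hMdef
  have hu0 : (0:ℝ) < u := by linarith
  have hM1 : 1 ≤ M := Nat.le_floor (by exact_mod_cast (by linarith : (1:ℝ) ≤ u))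
  have hMle : (M:ℝ) ≤ u := Nat.floor_le hu0.le
  have hMgt : u - 1 < (M:ℝ) := by
    have h := Nat.lt_floor_add_one u
    linarith
  have hNT : N < T := by
    have h : (N:ℝ) < (T:ℝ) := by linarith
    exact_mod_cast h
  have hMT : M < T := by
    have h : (M:ℝ) < (T:ℝ) := by linarith
    exact_mod_cast h
  have hlen : |(N:ℝ) - M| ≤ δ + 1 := by
    rw [abs_le]
    constructor <;> linarith
  have habs := window_transfer g μv L (δ + 1) T hL0.le (by linarith) hW M N hNT hMT hlen
  have hsu : 0 < Real.sqrt u := Real.sqrt_pos.mpr hu0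
  have hssu : Real.sqrt u * Real.sqrt u = u := Real.mul_self_sqrt hu0.le
  set E : ℝ := Real.sqrt (2 * L * (δ + 1)) with hEdef
  have hE : E ≤ Real.sqrt u / 8 := by
    have h1 : 2 * L * (δ + 1) ≤ u / 64 := by nlinarith
    have h2 : Real.sqrt (u / 64) = Real.sqrt u / 8 := by
      rw [show u / 64 = u / 8 ^ 2 by norm_num, Real.sqrt_div' u (by norm_num),
        Real.sqrt_sq (by norm_num : (0:ℝ) ≤ 8)]
    calc E ≤ Real.sqrt (u / 64) := Real.sqrt_le_sqrt h1
      _ = Real.sqrt u / 8 := h2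
  refine ⟨hNpos, hM1, habs, ?_⟩
  have hkey : (N:ℝ)/4 + E * Real.sqrt u < M := by
    have h1 : E * Real.sqrt u ≤ u / 8 := by
      have hm := mul_le_mul_of_nonneg_right hE hsu.le
      calc E * Real.sqrt u ≤ Real.sqrt u / 8 * Real.sqrt u := hm
        _ = u / 8 := by rw [div_mul_eq_mul_div, hssu]
    linarith
  have h2 : ((N:ℝ)/4 + E * Real.sqrt u) / Real.sqrt u < (M:ℝ) / Real.sqrt u := by
    gcongr
  have h3 : ((N:ℝ)/4 + E * Real.sqrt u) / Real.sqrt u = (N:ℝ)/4 * (1 / Real.sqrt u) + E := by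
    field_simp
  have h4 : (M:ℝ) / Real.sqrt u = (M:ℝ) * (1 / Real.sqrt u) := by rw [mul_one_div]
  linarith

/-- in the three-level policy (with the parameters of Theorem 3.3),
condition on the events `W1` (concentration of per-group pull counts), `W2`
(concentration of tape window averages) and `W3` (anti-concentration: for each arm
`a` there is a group `s_a` whose first `q a · T1` tape cells for arm `a` average at
least `μ a + 1/√(q a T1)` while the first `q (3-a) · T1` cells for the other arm
average at most `μ (3-a) - 1/√(q (3-a) T1)`).  Then, provided `T` is larger than
some constant, for each arm `a` there is a first-level group `s_a` with
`μ̄_a^{1,s_a} > μ a + 1/(4√(q a T1))` and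
`μ̄_{3-a}^{1,s_a} < μ (3-a) - 1/(4√(q (3-a) T1))`. -/
theorem lucky_group (Nest Lfdp : ℕ) (q : Fin 2 → ℝ) (hq0 : ∀ a, 0 < q a) :
    ∃ T0 : ℕ, ∀ T : ℕ, T0 ≤ T →
    ∀ (Ω : Type) [MeasureSpace Ω] [IsProbabilityMeasure (volume : Measure Ω)],
    ∀ e : Execution Ω 2 T Nest,
      ThreeLevel e.obs (sigT T) (T1of T) (T2of T) Lfdp →
      (∀ (a : Fin 2) (j : ℕ), j < sigT T * T1of T →
        ∫ ω, (pullCount e.A (Finset.Ico (j * Lfdp) ((j + 1) * Lfdp)) a ω : ℝ) = q a) →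
    ∀ gtape : ℕ → Fin 2 → ℕ → Ω → ℝ,
      (∀ s < sigT T, ∀ (ω : Ω), ∀ t ∈ grp (T1of T) Lfdp s,
        e.r t ω = gtape s (e.A t ω) (idxIn e.A (grp (T1of T) Lfdp s) (e.A t ω) ω t) ω) →
    ∀ ω : Ω,
      -- event W1 at ω
      (∀ s < sigT T, ∀ a : Fin 2,
        |(pullCount e.A (grp (T1of T) Lfdp s) a ω : ℝ) - q a * T1of T|
          ≤ (Lfdp : ℝ) * Real.sqrt (T1of T * Real.log T)) →
      -- event W2 at ω
      (∀ s < sigT T, ∀ a : Fin 2, ∀ τ1 τ2 : ℕ, τ1 ≤ τ2 → τ2 < T →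
        |(∑ j ∈ Finset.Icc τ1 τ2, gtape s a j ω) / ((τ2 - τ1 + 1 : ℕ) : ℝ) - e.μ a|
          ≤ Real.sqrt (2 * Real.log T / ((τ2 - τ1 + 1 : ℕ) : ℝ))) →
      -- event W3 at ω
      (∀ a : Fin 2, ∃ s < sigT T,
        e.μ a + 1 / Real.sqrt (q a * T1of T) ≤
          (∑ j ∈ Finset.range ⌊q a * (T1of T : ℝ)⌋₊, gtape s a j ω) / (⌊q a * (T1of T : ℝ)⌋₊ : ℝ) ∧
        (∑ j ∈ Finset.range ⌊q (1 - a) * (T1of T : ℝ)⌋₊, gtape s (1 - a) j ω) /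
            (⌊q (1 - a) * (T1of T : ℝ)⌋₊ : ℝ)
          ≤ e.μ (1 - a) - 1 / Real.sqrt (q (1 - a) * T1of T)) →
      ∀ a : Fin 2, ∃ s < sigT T,
        e.μ a + 1 / (4 * Real.sqrt (q a * T1of T)) <
          empMean e.A e.r (grp (T1of T) Lfdp s) a ω ∧
        empMean e.A e.r (grp (T1of T) Lfdp s) (1 - a) ω <
          e.μ (1 - a) - 1 / (4 * Real.sqrt (q (1 - a) * T1of T)) := by

  obtain ⟨T0, hT0⟩ := Filter.eventually_atTop.mp
    ((evt Lfdp (q 0) (hq0 0)).and (evt Lfdp (q 1) (hq0 1)))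
  refine ⟨T0, ?_⟩
  intro T hT Ω _ _ e _h3lv _hq gtape hg ω hW1 hW2 hW3 a
  have hCond : ∀ b : Fin 2, Conds Lfdp T (q b) := by
    intro b
    have h := hT0 T hT
    fin_cases b
    · exact h.1
    · exact h.2
  obtain ⟨s, hs, h3a, h3b⟩ := hW3 a
  have hemp : ∀ b : Fin 2, empMean e.A e.r (grp (T1of T) Lfdp s) b ω
      = (∑ j ∈ Finset.range (pullCount e.A (grp (T1of T) Lfdp s) b ω), gtape s b j ω)
        / (pullCount e.A (grp (T1of T) Lfdp s) b ω : ℝ) := by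
    intro b
    unfold empMean
    congr 1
    rw [← sum_pulls_eq e.A (grp (T1of T) Lfdp s) b ω (fun j => gtape s b j ω)]
    refine Finset.sum_congr rfl fun t ht => ?_
    obtain ⟨htS, hA⟩ := Finset.mem_filter.mp ht
    rw [hg s hs ω t htS, hA]
  refine ⟨s, hs, ?_, ?_⟩
  · -- upper deviation for arm a
    obtain ⟨hNpos, hM1, habs, hlt⟩ := core Lfdp T (q a) (e.μ a) (hCond a)
      (fun j => gtape s a j ω) (pullCount e.A (grp (T1of T) Lfdp s) a ω)
      (hW1 s hs a) (hW2 s hs a)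
    rw [hemp a]
    have hNR : (0:ℝ) < (pullCount e.A (grp (T1of T) Lfdp s) a ω : ℝ) := by exact_mod_cast hNpos
    have hMR : (0:ℝ) < ((⌊q a * ((T1of T : ℕ) : ℝ)⌋₊ : ℕ) : ℝ) := by exact_mod_cast hM1
    rw [lt_div_iff₀ hNR]
    have h3a' : (e.μ a + 1 / Real.sqrt (q a * T1of T)) * (⌊q a * ((T1of T : ℕ) : ℝ)⌋₊ : ℝ)
        ≤ ∑ j ∈ Finset.range ⌊q a * ((T1of T : ℕ) : ℝ)⌋₊, gtape s a j ω :=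
      (le_div_iff₀ hMR).mp h3a
    have habs' := abs_le.mp habs
    have hrw : e.μ a + 1 / (4 * Real.sqrt (q a * T1of T))
        = e.μ a + (1 / Real.sqrt (q a * T1of T)) / 4 := by ring
    rw [hrw]
    nlinarith [habs'.1, h3a', hlt]
  · -- lower deviation for arm 1 - a
    obtain ⟨hNpos, hM1, habs, hlt⟩ := core Lfdp T (q (1 - a)) (e.μ (1 - a)) (hCond (1 - a))
      (fun j => gtape s (1 - a) j ω) (pullCount e.A (grp (T1of T) Lfdp s) (1 - a) ω)
      (hW1 s hs (1 - a)) (hW2 s hs (1 - a))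
    rw [hemp (1 - a)]
    have hNR : (0:ℝ) < (pullCount e.A (grp (T1of T) Lfdp s) (1 - a) ω : ℝ) := by
      exact_mod_cast hNpos
    have hMR : (0:ℝ) < ((⌊q (1 - a) * ((T1of T : ℕ) : ℝ)⌋₊ : ℕ) : ℝ) := by exact_mod_cast hM1
    rw [div_lt_iff₀ hNR]
    have h3b' : (∑ j ∈ Finset.range ⌊q (1 - a) * ((T1of T : ℕ) : ℝ)⌋₊, gtape s (1 - a) j ω)
        ≤ (e.μ (1 - a) - 1 / Real.sqrt (q (1 - a) * T1of T)) * (⌊q (1 - a) * ((T1of T : ℕ) : ℝ)⌋₊ : ℝ) :=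
      (div_le_iff₀ hMR).mp h3b
    have habs' := abs_le.mp habs
    have hrw : e.μ (1 - a) - 1 / (4 * Real.sqrt (q (1 - a) * T1of T))
        = e.μ (1 - a) - (1 / Real.sqrt (q (1 - a) * T1of T)) / 4 := by ring
    rw [hrw]
    nlinarith [habs'.2, h3b', hlt]

end IncExp
end
end

section
/- (Large gap case.) Assume μ_1 ≥ μ_2 and condition on the intersection W of the four good events W1–W4 of the three-level policy. If the gap Δ = μ_1 − μ_2 satisfies Δ ≥ 4·Σ_{a∈{1,2}} √(log(T)/(q_a·T1)), then all agents in the second and third levels pull arm 1. -/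
open MeasureTheory ProbabilityTheory

noncomputable section

namespace IncExp

section AuxLemmas
open Filter

variable {Ω : Type} {K : ℕ} (A : ℕ → Ω → Fin K) (S : Finset ℕ) (a : Fin K) (ω : Ω)

lemma pullCount_mono {S S' : Finset ℕ} (h : S ⊆ S') : pullCount A S a ω ≤ pullCount A S' a ω :=
  Finset.card_le_card (Finset.filter_subset_filter _ h)

lemma idxIn_lt_pullCount {t : ℕ} (ht : t ∈ S) (ha : A t ω = a) :
    idxIn A S a ω t < pullCount A S a ω := by
  unfold idxIn pullCount
  have hnot : t ∉ ((S.filter fun s => s < t).filter fun s => A s ω = a) := by simp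
  have hsub : insert t ((S.filter fun s => s < t).filter fun s => A s ω = a)
      ⊆ S.filter fun s => A s ω = a := by
    intro x hx
    rcases Finset.mem_insert.mp hx with rfl | hx
    · exact Finset.mem_filter.mpr ⟨ht, ha⟩
    · simp only [Finset.mem_filter] at hx ⊢; exact ⟨hx.1.1, hx.2⟩
  have := Finset.card_le_card hsub
  rw [Finset.card_insert_of_notMem hnot] at this
  omega

lemma idxIn_strictMono {t t' : ℕ} (ht : t ∈ S) (ha : A t ω = a) (htt : t < t') :
    idxIn A S a ω t < idxIn A S a ω t' := by
  unfold idxIn pullCount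
  have hnot : t ∉ ((S.filter fun s => s < t).filter fun s => A s ω = a) := by simp
  have hsub : insert t ((S.filter fun s => s < t).filter fun s => A s ω = a)
      ⊆ (S.filter fun s => s < t').filter fun s => A s ω = a := by
    intro x hx
    rcases Finset.mem_insert.mp hx with rfl | hx
    · simp only [Finset.mem_filter]; exact ⟨⟨ht, htt⟩, ha⟩
    · simp only [Finset.mem_filter] at hx ⊢; exact ⟨⟨hx.1.1, hx.1.2.trans htt⟩, hx.2⟩
  have := Finset.card_le_card hsub
  rw [Finset.card_insert_of_notMem hnot] at this
  omega

lemma idxIn_injOn : Set.InjOn (idxIn A S a ω) (S.filter fun t => A t ω = a) := by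
  intro t ht t' ht' h
  simp only [Finset.coe_filter, Set.mem_setOf_eq] at ht ht'
  rcases lt_trichotomy t t' with hlt | heq | hlt
  · exact absurd h (Nat.ne_of_lt (idxIn_strictMono A S a ω ht.1 ht.2 hlt))
  · exact heq
  · exact absurd h.symm (Nat.ne_of_lt (idxIn_strictMono A S a ω ht'.1 ht'.2 hlt))

lemma image_idxIn :
    (S.filter fun t => A t ω = a).image (idxIn A S a ω) = Finset.range (pullCount A S a ω) := by
  apply Finset.eq_of_subset_of_card_le
  · intro j hj
    rcases Finset.mem_image.mp hj with ⟨t, ht, rfl⟩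
    rcases Finset.mem_filter.mp ht with ⟨ht1, ht2⟩
    exact Finset.mem_range.mpr (idxIn_lt_pullCount A S a ω ht1 ht2)
  · rw [Finset.card_range, Finset.card_image_of_injOn (idxIn_injOn A S a ω)]
    exact le_rfl

lemma sum_idxIn (g : ℕ → ℝ) :
    ∑ t ∈ S.filter (fun t => A t ω = a), g (idxIn A S a ω t)
      = ∑ j ∈ Finset.range (pullCount A S a ω), g j := by
  rw [← image_idxIn A S a ω, Finset.sum_image (fun x hx y hy h => idxIn_injOn A S a ω hx hy h)]

lemma empMean_eq {Ω : Type} {K : ℕ} (A : ℕ → Ω → Fin K) (r : ℕ → Ω → ℝ) (S : Finset ℕ)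
    (a : Fin K) (ω : Ω) (g : ℕ → ℝ)
    (hr : ∀ t ∈ S, A t ω = a → r t ω = g (idxIn A S a ω t)) :
    empMean A r S a ω
      = (∑ j ∈ Finset.range (pullCount A S a ω), g j) / (pullCount A S a ω : ℝ) := by
  unfold empMean
  congr 1
  rw [← sum_idxIn A S a ω g]
  refine Finset.sum_congr rfl fun t ht => ?_
  rcases Finset.mem_filter.mp ht with ⟨h1, h2⟩
  exact hr t h1 h2

lemma idxIn_range_eq {Ω : Type} {K : ℕ} (A : ℕ → Ω → Fin K) (a : Fin K) (ω : Ω) {M t : ℕ}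
    (ht : t ≤ M) :
    idxIn A (Finset.range M) a ω t = pullCount A (Finset.range t) a ω := by
  unfold idxIn
  have h : (Finset.range M).filter (fun s => s < t) = Finset.range t := by
    ext s; simp only [Finset.mem_filter, Finset.mem_range]; omega
  rw [h]

lemma ev_real (c : ℝ) : ∀ᶠ x : ℝ in Filter.atTop,
    c * Real.log x ≤ x ^ ((4:ℝ)/7) * Real.log x ^ (-(1:ℝ)/7) := by
  have h := isLittleO_log_rpow_rpow_atTop ((8:ℝ)/7) (show (0:ℝ) < (4:ℝ)/7 by norm_num)
  have hb := h.bound (show (0:ℝ) < 1/(|c|+1) by positivity)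
  filter_upwards [hb, Filter.eventually_ge_atTop (Real.exp 1)] with x hx hex
  have hx0 : (0:ℝ) < x := lt_of_lt_of_le (Real.exp_pos 1) hex
  have hlx : 1 ≤ Real.log x := by
    rw [Real.le_log_iff_exp_le hx0]; simpa using hex
  have hl0 : (0:ℝ) < Real.log x := by linarith
  rw [Real.norm_eq_abs, Real.norm_eq_abs, abs_of_nonneg (Real.rpow_nonneg hl0.le _),
      abs_of_nonneg (Real.rpow_nonneg hx0.le _)] at hx
  have key : |c| * Real.log x ^ ((8:ℝ)/7) ≤ x ^ ((4:ℝ)/7) := by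
    have h1 : |c| * (1/(|c|+1)) ≤ 1 := by
      rw [mul_one_div, div_le_one (by positivity)]; linarith [abs_nonneg c]
    calc |c| * Real.log x ^ ((8:ℝ)/7) ≤ |c| * (1/(|c|+1) * x ^ ((4:ℝ)/7)) :=
          mul_le_mul_of_nonneg_left hx (abs_nonneg c)
      _ = |c| * (1/(|c|+1)) * x ^ ((4:ℝ)/7) := by ring
      _ ≤ 1 * x ^ ((4:ℝ)/7) :=
          mul_le_mul_of_nonneg_right h1 (Real.rpow_nonneg hx0.le _)
      _ = x ^ ((4:ℝ)/7) := one_mul _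
  have hsplit : Real.log x = Real.log x ^ ((8:ℝ)/7) * Real.log x ^ (-(1:ℝ)/7) := by
    rw [← Real.rpow_add hl0]; norm_num
  calc c * Real.log x ≤ |c| * Real.log x :=
        mul_le_mul_of_nonneg_right (le_abs_self c) hl0.le
    _ = |c| * Real.log x ^ ((8:ℝ)/7) * Real.log x ^ (-(1:ℝ)/7) := by
        rw [mul_assoc, ← hsplit]
    _ ≤ x ^ ((4:ℝ)/7) * Real.log x ^ (-(1:ℝ)/7) :=
        mul_le_mul_of_nonneg_right key (Real.rpow_nonneg hl0.le _)

lemma ev_small (L : ℕ) : ∀ᶠ x : ℝ in Filter.atTop,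
    (L:ℝ) * (x ^ ((4:ℝ)/7) * Real.log x ^ (-(1:ℝ)/7) + 1) < x := by
  have h37 := (tendsto_rpow_atTop (show (0:ℝ) < (3:ℝ)/7 by norm_num)).eventually_ge_atTop
      (2*(L:ℝ)+2)
  filter_upwards [h37, Filter.eventually_ge_atTop (Real.exp 1)] with x hx hex
  have hx0 : (0:ℝ) < x := lt_of_lt_of_le (Real.exp_pos 1) hex
  have hlx : 1 ≤ Real.log x := by rw [Real.le_log_iff_exp_le hx0]; simpa using hex
  have hx1 : (1:ℝ) ≤ x := le_trans (Real.one_le_exp (by norm_num)) hex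
  have h47 : (1:ℝ) ≤ x ^ ((4:ℝ)/7) := Real.one_le_rpow hx1 (by norm_num)
  have hlog1 : Real.log x ^ (-(1:ℝ)/7) ≤ 1 :=
    Real.rpow_le_one_of_one_le_of_nonpos hlx (by norm_num)
  have hlogpos : (0:ℝ) < Real.log x ^ (-(1:ℝ)/7) := Real.rpow_pos_of_pos (by linarith) _
  have hxeq : x = x ^ ((3:ℝ)/7) * x ^ ((4:ℝ)/7) := by
    rw [← Real.rpow_add hx0]; norm_num
  have hstep : (L:ℝ) * (x ^ ((4:ℝ)/7) * Real.log x ^ (-(1:ℝ)/7) + 1)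
      ≤ (L:ℝ) * (x ^ ((4:ℝ)/7) + x ^ ((4:ℝ)/7)) := by
    apply mul_le_mul_of_nonneg_left _ (Nat.cast_nonneg L)
    have : x ^ ((4:ℝ)/7) * Real.log x ^ (-(1:ℝ)/7) ≤ x ^ ((4:ℝ)/7) * 1 :=
      mul_le_mul_of_nonneg_left hlog1 (by positivity)
    linarith
  calc (L:ℝ) * (x ^ ((4:ℝ)/7) * Real.log x ^ (-(1:ℝ)/7) + 1)
      ≤ (2*(L:ℝ)) * x ^ ((4:ℝ)/7) := by linarith [hstep]
    _ < (2*(L:ℝ)+2) * x ^ ((4:ℝ)/7) := by nlinarith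
    _ ≤ x ^ ((3:ℝ)/7) * x ^ ((4:ℝ)/7) := mul_le_mul_of_nonneg_right hx (by positivity)
    _ = x := hxeq.symm


lemma ev_T1 (c : ℝ) : ∀ᶠ T : ℕ in Filter.atTop, c * Real.log T ≤ (T1of T : ℝ) := by
  filter_upwards [tendsto_natCast_atTop_atTop.eventually (ev_real c)] with T hT
  exact hT.trans (Nat.le_ceil _)

lemma ev_T1small (L : ℕ) : ∀ᶠ T : ℕ in Filter.atTop, L * T1of T < T := by
  filter_upwards [tendsto_natCast_atTop_atTop.eventually (ev_small L)] with T hT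
  have hx0 : (0:ℝ) ≤ (T:ℝ) ^ ((4:ℝ)/7) * Real.log T ^ (-(1:ℝ)/7) :=
    mul_nonneg (Real.rpow_nonneg (Nat.cast_nonneg T) _)
      (Real.rpow_nonneg (Real.log_natCast_nonneg T) _)
  have hceil : (T1of T : ℝ) < (T:ℝ) ^ ((4:ℝ)/7) * Real.log T ^ (-(1:ℝ)/7) + 1 :=
    Nat.ceil_lt_add_one hx0
  have hfin : ((L * T1of T : ℕ) : ℝ) < (T:ℝ) := by
    push_cast
    calc (L:ℝ) * (T1of T : ℝ)
        ≤ (L:ℝ) * ((T:ℝ) ^ ((4:ℝ)/7) * Real.log T ^ (-(1:ℝ)/7) + 1) :=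
          mul_le_mul_of_nonneg_left hceil.le (Nat.cast_nonneg L)
      _ < T := hT
  exact_mod_cast hfin

lemma est_gap {Ω : Type} [MeasureSpace Ω] {T Nest : ℕ} (e : Execution Ω 2 T Nest)
    (q : Fin 2 → ℝ) (T1 : ℕ) (hlog : 1 ≤ Real.log T) (t : ℕ) (ω : Ω)
    (hone : ∀ a : Fin 2, 1 ≤ q a * T1 / 2)
    (hNest : ∀ a : Fin 2, (Nest : ℝ) ≤ q a * T1 / 2)
    (hN : ∀ a : Fin 2, q a * T1 / 2 ≤ (pullCount e.A (e.obs t) a ω : ℝ))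
    (hemp : ∀ a : Fin 2, |empMean e.A e.r (e.obs t) a ω - e.μ a| ≤
        Real.sqrt (2 * Real.log T / (pullCount e.A (e.obs t) a ω : ℝ)))
    (hgap : 4 * (Real.sqrt (Real.log T / (q 0 * T1)) + Real.sqrt (Real.log T / (q 1 * T1)))
        ≤ e.μ 0 - e.μ 1) :
    e.A t ω = 0 := by
  have key : ∀ a : Fin 2,
      |e.est t a ω - e.μ a| ≤ 17/8 * Real.sqrt (Real.log T / (q a * T1)) := by
    intro a
    have hq2 : (0:ℝ) < q a * T1 := by linarith [hone a]
    have hNpos : (0:ℝ) < (pullCount e.A (e.obs t) a ω : ℝ) := by linarith [hone a, hN a]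
    have hNnat : Nest ≤ pullCount e.A (e.obs t) a ω := by exact_mod_cast (hNest a).trans (hN a)
    have hclose := (e.est_close t a ω hNnat).le
    have hempa := hemp a
    set N : ℝ := (pullCount e.A (e.obs t) a ω : ℝ) with hNdef
    set sa := Real.sqrt (Real.log T / (q a * T1)) with hsa
    have hb1 : Real.sqrt (2 * Real.log T / N) ≤ 2 * sa := by
      have h4 : 2 * Real.log T / N ≤ 4 * Real.log T / (q a * T1) := by
        rw [div_le_div_iff₀ hNpos hq2]
        nlinarith [mul_le_mul_of_nonneg_left (hN a) (by linarith : (0:ℝ) ≤ 4 * Real.log T)]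
      have h5 : 4 * Real.log T / (q a * T1) = 2^2 * (Real.log T / (q a * T1)) := by ring
      calc Real.sqrt (2 * Real.log T / N) ≤ Real.sqrt (2^2 * (Real.log T / (q a * T1))) := by
            rw [← h5]; exact Real.sqrt_le_sqrt h4
        _ = 2 * sa := by
            rw [Real.sqrt_mul (by norm_num : (0:ℝ) ≤ 2^2), Real.sqrt_sq (by norm_num : (0:ℝ) ≤ 2)]
    have hb2 : 1/16 / Real.sqrt N ≤ 1/8 * sa := by
      have h7 : 1 / Real.sqrt N ≤ Real.sqrt (2 * Real.log T / N) := by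
        rw [show (1:ℝ) / Real.sqrt N = Real.sqrt (1 / N) by
          rw [one_div, one_div, Real.sqrt_inv]]
        apply Real.sqrt_le_sqrt
        gcongr
        linarith
      calc 1/16 / Real.sqrt N = 1/16 * (1 / Real.sqrt N) := by ring
        _ ≤ 1/16 * (2 * sa) := mul_le_mul_of_nonneg_left (h7.trans hb1) (by norm_num)
        _ = 1/8 * sa := by ring
    calc |e.est t a ω - e.μ a|
        ≤ |e.est t a ω - empMean e.A e.r (e.obs t) a ω|
          + |empMean e.A e.r (e.obs t) a ω - e.μ a| := abs_sub_le _ _ _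
      _ ≤ 1/16 / Real.sqrt N + Real.sqrt (2 * Real.log T / N) := add_le_add hclose hempa
      _ ≤ 1/8 * sa + 2 * sa := add_le_add hb2 hb1
      _ = 17/8 * sa := by ring
  have h0 := abs_le.mp (key 0)
  have h1 := abs_le.mp (key 1)
  have hs0pos : 0 < Real.sqrt (Real.log T / (q 0 * T1)) :=
    Real.sqrt_pos.mpr (div_pos (by linarith) (by linarith [hone 0]))
  have hs1pos : 0 < Real.sqrt (Real.log T / (q 1 * T1)) :=
    Real.sqrt_pos.mpr (div_pos (by linarith) (by linarith [hone 1]))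
  have hmax := e.A_max t ω 0
  by_contra hne
  have hA1 : e.A t ω = 1 := by
    have hv := (e.A t ω).isLt
    simp only [Fin.ext_iff, Fin.val_zero, Fin.val_one] at hne ⊢
    omega
  rw [hA1] at hmax
  linarith [h0.1, h1.2, hmax, hgap]

end AuxLemmas

set_option maxHeartbeats 1000000 in
/-- large gap: assume `μ₁ ≥ μ₂` and condition on the good events
`W1–W4` of the three-level policy.  If the gap satisfies
`Δ ≥ 4·Σ_a √(log T / (q a · T1))` then all agents in the second and third levels
pull arm 1 (the best arm, index `0`). -/
theorem large_gap (Nest Lfdp : ℕ) (q : Fin 2 → ℝ) (hq0 : ∀ a, 0 < q a) :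
    ∃ T0 : ℕ, ∀ T : ℕ, T0 ≤ T →
    ∀ (Ω : Type) [MeasureSpace Ω] [IsProbabilityMeasure (volume : Measure Ω)],
    ∀ e : Execution Ω 2 T Nest,
      -- arm 1 (index 0) is the best arm
      e.μ 1 ≤ e.μ 0 →
      ThreeLevel e.obs (sigT T) (T1of T) (T2of T) Lfdp →
      (∀ (a : Fin 2) (j : ℕ), j < sigT T * T1of T →
        ∫ ω, (pullCount e.A (Finset.Ico (j * Lfdp) ((j + 1) * Lfdp)) a ω : ℝ) = q a) →
    ∀ gtape : ℕ → Fin 2 → ℕ → Ω → ℝ,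
      (∀ s < sigT T, ∀ (ω : Ω), ∀ t ∈ grp (T1of T) Lfdp s,
        e.r t ω = gtape s (e.A t ω) (idxIn e.A (grp (T1of T) Lfdp s) (e.A t ω) ω t) ω) →
    ∀ ω : Ω,
      -- event W1 at ω: concentration of per-group pull counts
      (∀ s < sigT T, ∀ a : Fin 2,
        |(pullCount e.A (grp (T1of T) Lfdp s) a ω : ℝ) - q a * T1of T|
          ≤ (Lfdp : ℝ) * Real.sqrt (T1of T * Real.log T)) →
      -- event W2 at ω: concentration of tape window averages in the first level
      (∀ s < sigT T, ∀ a : Fin 2, ∀ τ1 τ2 : ℕ, τ1 ≤ τ2 → τ2 < T →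
        |(∑ j ∈ Finset.Icc τ1 τ2, gtape s a j ω) / ((τ2 - τ1 + 1 : ℕ) : ℝ) - e.μ a|
          ≤ Real.sqrt (2 * Real.log T / ((τ2 - τ1 + 1 : ℕ) : ℝ))) →
      -- event W3 at ω: anti-concentration, each arm has a lucky first-level group
      (∀ a : Fin 2, ∃ s < sigT T,
        e.μ a + 1 / Real.sqrt (q a * T1of T) ≤
          (∑ j ∈ Finset.range ⌊q a * (T1of T : ℝ)⌋₊, gtape s a j ω) / (⌊q a * (T1of T : ℝ)⌋₊ : ℝ) ∧
        (∑ j ∈ Finset.range ⌊q (1 - a) * (T1of T : ℝ)⌋₊, gtape s (1 - a) j ω) /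
            (⌊q (1 - a) * (T1of T : ℝ)⌋₊ : ℝ)
          ≤ e.μ (1 - a) - 1 / Real.sqrt (q (1 - a) * T1of T)) →
      -- event W4 at ω: concentration of prefix empirical means over the whole run
      (∀ (a : Fin 2) (τ : ℕ), 1 ≤ τ → τ ≤ pullCount e.A (Finset.range T) a ω →
        |(∑ j ∈ Finset.range τ, e.tape a j ω) / (τ : ℝ) - e.μ a|
          ≤ Real.sqrt (2 * Real.log T / (τ : ℝ))) →
      -- large gap
      4 * (Real.sqrt (Real.log T / (q 0 * T1of T)) + Real.sqrt (Real.log T / (q 1 * T1of T)))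
          ≤ e.μ 0 - e.μ 1 →
      -- all agents of the second and third levels pull arm 1
      ∀ t : ℕ, sigT T * T1of T * Lfdp ≤ t → t < T → e.A t ω = 0 := by
  classical
  obtain ⟨qm, hqm, hqa⟩ : ∃ qm : ℝ, 0 < qm ∧ ∀ a : Fin 2, qm ≤ q a :=
    ⟨min (q 0) (q 1), lt_min (hq0 0) (hq0 1), fun a => by
      fin_cases a
      · exact min_le_left _ _
      · exact min_le_right _ _⟩
  set c : ℝ := (4*(Lfdp:ℝ)^2 + 2*Nest + 4) * (1/qm^2 + 1/qm + 1) with hc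
  have hAux : ∀ᶠ T : ℕ in Filter.atTop,
      (c * Real.log T ≤ (T1of T : ℝ)) ∧ (Lfdp * T1of T < T) ∧ 3 ≤ T :=
    (ev_T1 c).and ((ev_T1small Lfdp).and (Filter.eventually_ge_atTop 3))
  obtain ⟨T0, hT0⟩ := Filter.eventually_atTop.mp hAux
  refine ⟨T0, fun T hTT0 Ω _ _ e hbest hTL hqexp gtape hgt ω hW1 hW2 hW3 hW4 hgap t hts htT => ?_⟩
  obtain ⟨hcT1, hsmall, hT3⟩ := hT0 T hTT0
  have hTpos : (0:ℝ) < T := by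
    have : (3:ℝ) ≤ (T:ℝ) := by exact_mod_cast hT3
    linarith
  have hlog : 1 ≤ Real.log T := by
    rw [Real.le_log_iff_exp_le hTpos]
    calc Real.exp 1 ≤ 2.7182818286 := Real.exp_one_lt_d9.le
      _ ≤ 3 := by norm_num
      _ ≤ (T:ℝ) := by exact_mod_cast hT3
  have hlogpos : (0:ℝ) < Real.log T := by linarith
  -- constant bookkeeping
  have hA0 : (0:ℝ) ≤ 4*(Lfdp:ℝ)^2 + 2*Nest + 4 := by positivity
  have hB1 : 1 ≤ qm * (1/qm^2 + 1/qm + 1) := by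
    have h : qm * (1/qm^2 + 1/qm + 1) = 1/qm + 1 + qm := by field_simp
    rw [h]
    have := one_div_pos.mpr hqm
    linarith
  have hB2 : 1 ≤ qm^2 * (1/qm^2 + 1/qm + 1) := by
    have h : qm^2 * (1/qm^2 + 1/qm + 1) = 1 + qm + qm^2 := by field_simp
    rw [h]; nlinarith
  have hcqm : (4*(Lfdp:ℝ)^2 + 2*Nest + 4) ≤ qm * c := by
    calc (4*(Lfdp:ℝ)^2 + 2*Nest + 4) = (4*(Lfdp:ℝ)^2 + 2*Nest + 4) * 1 := (mul_one _).symm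
      _ ≤ (4*(Lfdp:ℝ)^2 + 2*Nest + 4) * (qm * (1/qm^2 + 1/qm + 1)) :=
          mul_le_mul_of_nonneg_left hB1 hA0
      _ = qm * c := by rw [hc]; ring
  have hcqm2 : 4*(Lfdp:ℝ)^2 ≤ qm^2 * c := by
    calc 4*(Lfdp:ℝ)^2 ≤ (4*(Lfdp:ℝ)^2 + 2*Nest + 4) * 1 := by
          rw [mul_one]; linarith [Nat.cast_nonneg (α := ℝ) Nest]
      _ ≤ (4*(Lfdp:ℝ)^2 + 2*Nest + 4) * (qm^2 * (1/qm^2 + 1/qm + 1)) :=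
          mul_le_mul_of_nonneg_left hB2 hA0
      _ = qm^2 * c := by rw [hc]; ring
  have hqaT1 : ∀ a : Fin 2, (2*(Nest:ℝ)+4) * Real.log T ≤ q a * T1of T := by
    intro a
    calc (2*(Nest:ℝ)+4) * Real.log T ≤ (4*(Lfdp:ℝ)^2 + 2*Nest + 4) * Real.log T := by
          nlinarith [sq_nonneg (Lfdp:ℝ)]
      _ ≤ (qm * c) * Real.log T := mul_le_mul_of_nonneg_right hcqm hlogpos.le
      _ = qm * (c * Real.log T) := by ring
      _ ≤ qm * (T1of T : ℝ) := mul_le_mul_of_nonneg_left hcT1 hqm.le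
      _ ≤ q a * (T1of T : ℝ) := mul_le_mul_of_nonneg_right (hqa a) (Nat.cast_nonneg _)
  have hone : ∀ a : Fin 2, 1 ≤ q a * T1of T / 2 := by
    intro a
    have h1 := hqaT1 a
    nlinarith [Nat.cast_nonneg (α := ℝ) Nest]
  have hNest : ∀ a : Fin 2, (Nest:ℝ) ≤ q a * T1of T / 2 := by
    intro a
    have h1 := hqaT1 a
    nlinarith [Nat.cast_nonneg (α := ℝ) Nest]
  have hW1bound : ∀ a : Fin 2,
      (Lfdp:ℝ) * Real.sqrt (T1of T * Real.log T) ≤ q a * T1of T / 2 := by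
    intro a
    have h1 : 4*(Lfdp:ℝ)^2 * Real.log T ≤ qm^2 * T1of T := by
      calc 4*(Lfdp:ℝ)^2 * Real.log T ≤ (qm^2 * c) * Real.log T :=
            mul_le_mul_of_nonneg_right hcqm2 hlogpos.le
        _ = qm^2 * (c * Real.log T) := by ring
        _ ≤ qm^2 * (T1of T : ℝ) := mul_le_mul_of_nonneg_left hcT1 (sq_nonneg qm)
    have hT1nn : (0:ℝ) ≤ (T1of T : ℝ) := Nat.cast_nonneg _
    have h2 : qm^2 ≤ (q a)^2 := by nlinarith [hqa a, hqm]
    have hsq : (Lfdp:ℝ)^2 * ((T1of T : ℝ) * Real.log T) ≤ (q a * T1of T / 2)^2 := by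
      have e1 := mul_le_mul_of_nonneg_right h1 hT1nn
      have e2 := mul_le_mul_of_nonneg_right h2 (mul_nonneg hT1nn hT1nn)
      linarith [e1, e2]
    have h3 : Real.sqrt ((Lfdp:ℝ)^2 * ((T1of T : ℝ) * Real.log T))
        = (Lfdp:ℝ) * Real.sqrt ((T1of T : ℝ) * Real.log T) := by
      rw [Real.sqrt_mul (by positivity : (0:ℝ) ≤ (Lfdp:ℝ)^2),
        Real.sqrt_sq (Nat.cast_nonneg _)]
    have h4 : Real.sqrt ((q a * (T1of T : ℝ) / 2)^2) = q a * (T1of T : ℝ) / 2 :=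
      Real.sqrt_sq (by nlinarith [hone a])
    rw [← h3, ← h4]
    exact Real.sqrt_le_sqrt hsq
  -- case split on levels
  by_cases hcase : t < sigT T * T1of T * Lfdp + sigT T * T2of T
  · -- second level
    have hT2pos : 0 < T2of T := by
      apply Nat.ceil_pos.mpr
      have h1 : (0:ℝ) < (T:ℝ) ^ ((6:ℝ)/7) := Real.rpow_pos_of_pos hTpos _
      have h2 : (0:ℝ) < Real.log T ^ (-(5:ℝ)/7) := Real.rpow_pos_of_pos hlogpos _
      exact mul_pos h1 h2
    obtain ⟨u, rfl⟩ : ∃ u, t = sigT T * T1of T * Lfdp + u :=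
      ⟨t - sigT T * T1of T * Lfdp, by omega⟩
    have hu : u < sigT T * T2of T := by omega
    set s := u / T2of T with hsdef
    have hdm := Nat.div_add_mod u (T2of T)
    have hsσ : s < sigT T := by
      rw [hsdef, Nat.div_lt_iff_lt_mul hT2pos]
      exact hu
    have htmem : sigT T * T1of T * Lfdp + u ∈
        Finset.Ico (sigT T * T1of T * Lfdp + s * T2of T)
          (sigT T * T1of T * Lfdp + (s + 1) * T2of T) := by
      rw [Finset.mem_Ico]
      constructor
      · have h1 : s * T2of T ≤ u := by
          rw [hsdef]; exact Nat.div_mul_le_self u (T2of T)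
        exact Nat.add_le_add_left h1 _
      · apply Nat.add_lt_add_left
        have hmod := Nat.mod_lt u hT2pos
        have h2 : (s + 1) * T2of T = T2of T * s + T2of T := by ring
        rw [h2, hsdef]
        calc u = T2of T * (u / T2of T) + u % T2of T := hdm.symm
          _ < T2of T * (u / T2of T) + T2of T := by
              exact Nat.add_lt_add_left hmod _
    have hobs : e.obs (sigT T * T1of T * Lfdp + u) = grp (T1of T) Lfdp s :=
      hTL.2.1 s hsσ _ htmem
    have hkey : ∀ a : Fin 2,
        (q a * T1of T / 2 ≤ (pullCount e.A (e.obs (sigT T * T1of T * Lfdp + u)) a ω : ℝ)) ∧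
        |empMean e.A e.r (e.obs (sigT T * T1of T * Lfdp + u)) a ω - e.μ a| ≤
          Real.sqrt (2 * Real.log T /
            (pullCount e.A (e.obs (sigT T * T1of T * Lfdp + u)) a ω : ℝ)) := by
      intro a
      rw [hobs]
      set N := pullCount e.A (grp (T1of T) Lfdp s) a ω with hNdef
      have hW1' := hW1 s hsσ a
      have hNlow : q a * T1of T / 2 ≤ (N:ℝ) := by
        have h1 := (abs_le.mp hW1').1
        have h2 := hW1bound a
        linarith
      have hN1 : 1 ≤ N := by
        have h1 : (1:ℝ) ≤ (N:ℝ) := le_trans (hone a) hNlow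
        exact_mod_cast h1
      have hNup : N ≤ T1of T * Lfdp := by
        have h1 : N ≤ (grp (T1of T) Lfdp s).card := Finset.card_filter_le _ _
        have h2 : (grp (T1of T) Lfdp s).card = T1of T * Lfdp := by
          rw [grp, Nat.card_Ico,
            show (s+1) * T1of T * Lfdp = s * T1of T * Lfdp + T1of T * Lfdp by ring,
            Nat.add_sub_cancel_left]
        rw [h2] at h1; exact h1
      have hNT : N - 1 < T := by
        have h3 : N < T := lt_of_le_of_lt (hNup.trans_eq (mul_comm _ _)) hsmall
        omega
      have hempMean : empMean e.A e.r (grp (T1of T) Lfdp s) a ω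
          = (∑ j ∈ Finset.range N, gtape s a j ω) / (N:ℝ) := by
        apply empMean_eq
        intro t' ht' ha'
        rw [hgt s hsσ ω t' ht', ha']
      have hW2' := hW2 s hsσ a 0 (N-1) (Nat.zero_le _) hNT
      have e1 : Finset.Icc 0 (N-1) = Finset.range N := by
        ext j; simp only [Finset.mem_Icc, Finset.mem_range]; omega
      have e2 : N - 1 - 0 + 1 = N := by omega
      rw [e1, e2] at hW2'
      exact ⟨hNlow, by rw [hempMean]; exact hW2'⟩
    exact est_gap e q (T1of T) hlog _ ω hone hNest (fun a => (hkey a).1) (fun a => (hkey a).2) hgap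
  · -- third level
    push_neg at hcase
    have hobs : e.obs t = Finset.range (sigT T * T1of T * Lfdp + sigT T * T2of T) :=
      hTL.2.2 t hcase
    set M := sigT T * T1of T * Lfdp + sigT T * T2of T with hMdef
    have hMT : M ≤ T := le_of_lt (lt_of_le_of_lt hcase htT)
    have hσpos : 0 < sigT T := by
      apply Nat.ceil_pos.mpr
      positivity
    have hsub0 : grp (T1of T) Lfdp 0 ⊆ Finset.range M := by
      intro x hx
      rw [grp, Finset.mem_Ico] at hx
      rw [Finset.mem_range]
      have h1 : x < T1of T * Lfdp := by
        have := hx.2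
        simpa using this
      have h2 : T1of T * Lfdp ≤ sigT T * (T1of T * Lfdp) := Nat.le_mul_of_pos_left _ hσpos
      calc x < T1of T * Lfdp := h1
        _ ≤ sigT T * (T1of T * Lfdp) := h2
        _ = sigT T * T1of T * Lfdp := (mul_assoc _ _ _).symm
        _ ≤ M := Nat.le_add_right _ _
    have hkey : ∀ a : Fin 2,
        (q a * T1of T / 2 ≤ (pullCount e.A (e.obs t) a ω : ℝ)) ∧
        |empMean e.A e.r (e.obs t) a ω - e.μ a| ≤
          Real.sqrt (2 * Real.log T / (pullCount e.A (e.obs t) a ω : ℝ)) := by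
      intro a
      rw [hobs]
      set N := pullCount e.A (Finset.range M) a ω with hNdef
      have hW1' := hW1 0 hσpos a
      have hNlow : q a * T1of T / 2 ≤ (N:ℝ) := by
        have h1 := (abs_le.mp hW1').1
        have h2 := hW1bound a
        have h3 : pullCount e.A (grp (T1of T) Lfdp 0) a ω ≤ N :=
          pullCount_mono e.A a ω hsub0
        have h4 : ((pullCount e.A (grp (T1of T) Lfdp 0) a ω : ℕ) : ℝ) ≤ (N:ℝ) := by
          exact_mod_cast h3
        linarith
      have hN1 : 1 ≤ N := by
        have h1 : (1:ℝ) ≤ (N:ℝ) := le_trans (hone a) hNlow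
        exact_mod_cast h1
      have hNle : N ≤ pullCount e.A (Finset.range T) a ω :=
        pullCount_mono e.A a ω (Finset.range_subset_range.mpr hMT)
      have hempMean : empMean e.A e.r (Finset.range M) a ω
          = (∑ j ∈ Finset.range N, e.tape a j ω) / (N:ℝ) := by
        apply empMean_eq
        intro t' ht' ha'
        rw [e.r_eq t' ω, ha', idxIn_range_eq e.A a ω (le_of_lt (Finset.mem_range.mp ht'))]
      have hW4' := hW4 a N hN1 hNle
      exact ⟨hNlow, by rw [hempMean]; exact hW4'⟩
    exact est_gap e q (T1of T) hlog t ω hone hNest (fun a => (hkey a).1) (fun a => (hkey a).2) hgap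

end IncExp
end
end
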